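/- For the stationary distribution π on ℕ₀^d \ {0} given by π_k = (e^{-2α}/(1-e^{-2α})) · ∏_{i=1}^d (2αρ_i)^{k_i}/k_i!, and for the jump rates q^b of the branching–coalescing–migrating particle-count process (coalescence at rate (1/ρ_i)·C(k_i,2) sends k → k − e_i, branching at rate α k_i sends k → k + e_i, migration at rate μ b(i,j) k_i sends k → k − e_i + e_j), the detailed balance relation π_k · q^b_{k,ℓ} = π_ℓ · q^a_{ℓ,k} holds for all k, ℓ ∈ ℕ₀^d \ {0}, where q^a denotes the same rates with b(i,j) replaced by a(i,j) := (ρ_j/ρ_i) b(j,i). -/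

import Mathlib

open Finset

lemma DB_prod_succ {d : ℕ} (c : Fin d → ℝ) (l : Fin d → ℕ) (i : Fin d) :
    ∏ m, c m ^ (l m + if m = i then 1 else 0) / ((l m + if m = i then 1 else 0).factorial : ℝ)
    = c i / ((l i : ℝ) + 1) * ∏ m, c m ^ l m / ((l m).factorial : ℝ) := by
  rw [Fintype.prod_eq_mul_prod_compl i, Fintype.prod_eq_mul_prod_compl i
    (fun m => c m ^ l m / ((l m).factorial : ℝ))]
  have hc : ∏ m ∈ ({i}ᶜ : Finset (Fin d)), c m ^ (l m + if m = i then 1 else 0) /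
      ((l m + if m = i then 1 else 0).factorial : ℝ)
      = ∏ m ∈ ({i}ᶜ : Finset (Fin d)), c m ^ l m / ((l m).factorial : ℝ) := by
    refine Finset.prod_congr rfl (fun m hm => ?_)
    simp only [Finset.mem_compl, Finset.mem_singleton] at hm
    simp [hm]
  rw [hc]
  have h1 : ((l i).factorial : ℝ) ≠ 0 := Nat.cast_ne_zero.mpr (Nat.factorial_ne_zero _)
  have h2 : ((l i : ℝ) + 1) ≠ 0 := by positivity
  have h3 : (((l i) + 1).factorial : ℝ) = ((l i : ℝ) + 1) * ((l i).factorial : ℝ) := by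
    rw [Nat.factorial_succ]; push_cast; ring
  simp only [if_pos rfl, pow_succ, h3]
  field_simp
  simp only [↓reduceIte]
  rw [h3, pow_succ]
  ring

lemma DB_sub_of_add {d : ℕ} {k l : Fin d → ℕ} {i : Fin d}
    (h : k = fun m => l m + if m = i then 1 else 0) :
    l = fun m => k m - if m = i then 1 else 0 := by
  subst h; funext m; by_cases hm : m = i <;> simp [hm]

lemma DB_add_of_sub {d : ℕ} {k l : Fin d → ℕ} {i : Fin d}
    (h : l = fun m => k m - if m = i then 1 else 0) (hk : 1 ≤ k i) :
    k = fun m => l m + if m = i then 1 else 0 := by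
  subst h; funext m; by_cases hm : m = i
  · simp [hm]; omega
  · simp [hm]

lemma DB_move_symm {d : ℕ} {k l : Fin d → ℕ} {i j : Fin d} (hij : i ≠ j) (hki : 1 ≤ k i)
    (h : l = fun m => k m - (if m = i then 1 else 0) + (if m = j then 1 else 0)) :
    k = fun m => l m - (if m = j then 1 else 0) + (if m = i then 1 else 0) := by
  subst h; funext m
  by_cases h1 : m = i
  · subst h1
    have : ¬ (m = j) := fun hh => hij hh
    simp [this]; omega
  · by_cases h2 : m = j
    · subst h2
      have : ¬ (m = i) := h1
      simp [this]
    · simp [h1, h2]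

lemma DB_choose_two (n : ℕ) : (((n+1).choose 2 : ℕ) : ℝ) = ((n:ℝ)+1) * n / 2 := by
  have hn : (n + 1).choose 2 * 2 = (n + 1) * n := by
    rw [Nat.choose_two_right]
    simp only [Nat.add_sub_cancel]
    rw [Nat.mul_comm (n+1) n]
    exact Nat.div_mul_cancel (Nat.even_mul_succ_self n).two_dvd
  have h2 := congrArg (fun x : ℕ => (x : ℝ)) hn
  push_cast at h2
  linarith

/-- **Detailed balance for the structured ASG particle-count process.**
The stationary distribution `π` on `ℕ₀^d \ {0}` satisfies
`π k * q^b k ℓ = π ℓ * q^a ℓ k`, where `q^b` are the jump rates of the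
branching–coalescing–migrating particle count process with backward migration
rates `b`, and `q^a` the same rates with `a i j = (ρ j / ρ i) * b j i`. -/
theorem detailed_balance_ASG
    (d : ℕ) (hd : 2 ≤ d) (α μ : ℝ) (hα : 0 < α) (hμ : 0 < μ)
    (ρ : Fin d → ℝ) (hρ : ∀ i, 0 < ρ i) (hρsum : ∑ i, ρ i = 1)
    (b : Fin d → Fin d → ℝ) (hbnn : ∀ i j, i ≠ j → 0 ≤ b i j)
    (hbdiag : ∀ i, b i i = 0)
    (hequil : ∀ j, ∑ i, ρ i * b i j = ρ j * ∑ i, b j i)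
    (a : Fin d → Fin d → ℝ) (ha : ∀ i j, a i j = ρ j / ρ i * b j i)
    (π : (Fin d → ℕ) → ℝ)
    (hπ : ∀ k, π k = Real.exp (-(2 * α)) / (1 - Real.exp (-(2 * α))) *
        ∏ i, (2 * α * ρ i) ^ (k i) / (Nat.factorial (k i)))
    (q : (Fin d → Fin d → ℝ) → (Fin d → ℕ) → (Fin d → ℕ) → ℝ)
    (hq : ∀ c k l, q c k l =
        (∑ i, if l = (fun m => k m - (if m = i then 1 else 0)) then
            (1 / ρ i) * ((k i).choose 2 : ℝ) else 0)
        + (∑ i, if l = (fun m => k m + (if m = i then 1 else 0)) then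
            α * (k i : ℝ) else 0)
        + ∑ i, ∑ j, if l = (fun m => k m - (if m = i then 1 else 0)
              + (if m = j then 1 else 0)) then
            μ * c i j * (k i : ℝ) else 0) :
    ∀ k l : Fin d → ℕ, k ≠ (fun _ => 0) → l ≠ (fun _ => 0) →
      π k * q b k l = π l * q a l k := by
  intro k l _ _
  set C := Real.exp (-(2 * α)) / (1 - Real.exp (-(2 * α))) with hCdef
  set P : (Fin d → ℕ) → ℝ :=
    fun k => ∏ i, (2 * α * ρ i) ^ (k i) / ((k i).factorial : ℝ) with hPdef
  have hπ' : ∀ k, π k = C * P k := hπ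
  have hPsucc : ∀ (w : Fin d → ℕ) (i : Fin d),
      P (fun m => w m + if m = i then 1 else 0)
        = (2 * α * ρ i) / ((w i : ℝ) + 1) * P w := fun w i =>
    DB_prod_succ (fun m => 2 * α * ρ m) w i
  have hρne : ∀ i, ρ i ≠ 0 := fun i => (hρ i).ne'
  -- coalescence / branching pairing
  have hCB : ∀ (k l : Fin d → ℕ) (i : Fin d),
      π k * (if l = (fun m => k m - if m = i then 1 else 0) then
          (1 / ρ i) * ((k i).choose 2 : ℝ) else 0)
      = π l * (if k = (fun m => l m + if m = i then 1 else 0) then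
          α * (l i : ℝ) else 0) := by
    intro k l i
    by_cases hkl : k = fun m => l m + if m = i then 1 else 0
    · rw [if_pos (DB_sub_of_add hkl), if_pos hkl]
      have hki : k i = l i + 1 := by
        have := congrFun hkl i; simpa using this
      have hPk : P k = (2 * α * ρ i) / ((l i : ℝ) + 1) * P l := by
        rw [hkl]; exact hPsucc l i
      have hne1 : ((l i : ℝ) + 1) ≠ 0 := by positivity
      rw [hπ' k, hπ' l, hPk, hki, DB_choose_two (l i)]
      have key : (2 * α * ρ i) / ((l i : ℝ) + 1) *
          ((1 / ρ i) * (((l i : ℝ) + 1) * (l i : ℝ) / 2)) = α * (l i : ℝ) := by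
        rw [div_mul_eq_mul_div, div_eq_iff hne1]
        field_simp [hρne i]
      linear_combination C * P l * key
    · rw [if_neg hkl]
      by_cases hs : l = fun m => k m - if m = i then 1 else 0
      · have hki : k i = 0 := by
          by_contra h
          exact hkl (DB_add_of_sub hs (Nat.one_le_iff_ne_zero.mpr h))
        rw [if_pos hs, hki]
        simp
      · rw [if_neg hs]; simp
  -- migration pairing
  have hMIG : ∀ (k l : Fin d → ℕ) (i j : Fin d),
      π k * (if l = (fun m => k m - (if m = i then 1 else 0)
            + (if m = j then 1 else 0)) then μ * b i j * (k i : ℝ) else 0)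
      = π l * (if k = (fun m => l m - (if m = j then 1 else 0)
            + (if m = i then 1 else 0)) then μ * a j i * (l j : ℝ) else 0) := by
    intro k l i j
    by_cases hij : i = j
    · subst hij
      simp [ha, hbdiag]
    · have hji : ¬ j = i := fun h => hij h.symm
      by_cases h1 : k = fun m => l m - (if m = j then 1 else 0)
          + (if m = i then 1 else 0)
      · have hki : k i = l i + 1 := by
          have := congrFun h1 i; simpa [hij] using this
        by_cases hlj : l j = 0
        · have hcond : ¬ (l = fun m => k m - (if m = i then 1 else 0)
              + (if m = j then 1 else 0)) := by
            intro hc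
            have := congrFun hc j
            simp [hji] at this
            omega
          rw [if_neg hcond, if_pos h1, hlj]
          simp
        · have hlj1 : 1 ≤ l j := Nat.one_le_iff_ne_zero.mpr hlj
          have h2 : l = fun m => k m - (if m = i then 1 else 0)
              + (if m = j then 1 else 0) := DB_move_symm hji hlj1 h1
          rw [if_pos h2, if_pos h1]
          set mid : Fin d → ℕ := fun m => l m - if m = j then 1 else 0 with hmid
          have hk' : k = fun m => mid m + if m = i then 1 else 0 := h1
          have hl' : l = fun m => mid m + if m = j then 1 else 0 := by
            funext m
            by_cases hm : m = j
            · subst hm; simp [hmid]; omega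
            · simp [hmid, hm]
          have hPk : P k = (2 * α * ρ i) / ((mid i : ℝ) + 1) * P mid := by
            rw [hk']; exact hPsucc mid i
          have hPl : P l = (2 * α * ρ j) / ((mid j : ℝ) + 1) * P mid := by
            rw [hl']; exact hPsucc mid j
          have hki' : k i = mid i + 1 := by rw [congrFun hk' i]; simp
          have hlj' : l j = mid j + 1 := by rw [congrFun hl' j]; simp
          have e1 : ((mid i : ℝ) + 1) ≠ 0 := by positivity
          have e2 : ((mid j : ℝ) + 1) ≠ 0 := by positivity
          rw [hπ' k, hπ' l, hPk, hPl, hki', hlj', ha]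
          push_cast
          have keyA : (2 * α * ρ i) / ((mid i : ℝ) + 1) *
              (μ * b i j * ((mid i : ℝ) + 1)) = μ * b i j * (2 * α * ρ i) := by
            rw [div_mul_eq_mul_div, div_eq_iff e1]; ring
          have keyB : (2 * α * ρ j) / ((mid j : ℝ) + 1) *
              (μ * (ρ i / ρ j * b i j) * ((mid j : ℝ) + 1))
              = μ * b i j * (2 * α * ρ i) := by
            rw [div_mul_eq_mul_div, div_eq_iff e2]
            field_simp [hρne j]
          linear_combination C * P mid * keyA - C * P mid * keyB
      · rw [if_neg h1]
        by_cases hc : l = fun m => k m - (if m = i then 1 else 0)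
            + (if m = j then 1 else 0)
        · have hki : k i = 0 := by
            by_contra h
            exact h1 (DB_move_symm hij (Nat.one_le_iff_ne_zero.mpr h) hc)
          rw [if_pos hc, hki]
          simp
        · rw [if_neg hc]; simp
  rw [hq b k l, hq a l k, mul_add, mul_add, mul_add, mul_add]
  have E1 : π k * (∑ i, if l = (fun m => k m - (if m = i then 1 else 0)) then
        (1 / ρ i) * ((k i).choose 2 : ℝ) else 0)
      = π l * (∑ i, if k = (fun m => l m + (if m = i then 1 else 0)) then
        α * (l i : ℝ) else 0) := by
    rw [Finset.mul_sum, Finset.mul_sum]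
    exact Finset.sum_congr rfl fun i _ => hCB k l i
  have E2 : π k * (∑ i, if l = (fun m => k m + (if m = i then 1 else 0)) then
        α * (k i : ℝ) else 0)
      = π l * (∑ i, if k = (fun m => l m - (if m = i then 1 else 0)) then
        (1 / ρ i) * ((l i).choose 2 : ℝ) else 0) := by
    rw [Finset.mul_sum, Finset.mul_sum]
    exact Finset.sum_congr rfl fun i _ => (hCB l k i).symm
  have E3 : π k * (∑ i, ∑ j, if l = (fun m => k m - (if m = i then 1 else 0)
        + (if m = j then 1 else 0)) then μ * b i j * (k i : ℝ) else 0)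
      = π l * (∑ i, ∑ j, if k = (fun m => l m - (if m = i then 1 else 0)
        + (if m = j then 1 else 0)) then μ * a i j * (l i : ℝ) else 0) := by
    simp only [Finset.mul_sum]
    calc (∑ i, ∑ j, π k * (if l = (fun m => k m - (if m = i then 1 else 0)
            + (if m = j then 1 else 0)) then μ * b i j * (k i : ℝ) else 0))
        = ∑ i, ∑ j, π l * (if k = (fun m => l m - (if m = j then 1 else 0)
            + (if m = i then 1 else 0)) then μ * a j i * (l j : ℝ) else 0) :=
          Finset.sum_congr rfl fun i _ => Finset.sum_congr rfl fun j _ => hMIG k l i j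
      _ = ∑ j, ∑ i, π l * (if k = (fun m => l m - (if m = j then 1 else 0)
            + (if m = i then 1 else 0)) then μ * a j i * (l j : ℝ) else 0) :=
          Finset.sum_comm
  linarith [E1, E2, E3]
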